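/- arXiv:2110.00445 — 5 statements merged into one kernel-verified Lean document; each statement's English description precedes it below -/
import Mathlib

section
/- Let P be an n×n irreducible row-stochastic matrix with stationary distribution μ. Then the matrix I − P + e·μᵀ is invertible. -/
open Finset Matrix

/-- For an irreducible row-stochastic matrix `P` with stationary
distribution `μ`, the matrix `I − P + e·μᵀ` is invertible. -/
theorem fundamental_matrix_invertible
    {n : ℕ} (P : Matrix (Fin n) (Fin n) ℝ) (μ : Fin n → ℝ)
    (hP : (∀ i j, 0 ≤ P i j) ∧ ∀ i, ∑ j, P i j = 1)
    (hirr : ∀ i j : Fin n, ∃ m : ℕ, 1 ≤ m ∧ 0 < (P ^ m) i j)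
    (hμ : (∀ i, 0 ≤ μ i) ∧ ∑ i, μ i = 1) (hμP : μ ᵥ* P = μ) :
    IsUnit (1 - P + Matrix.of (fun _ j : Fin n => μ j)) := by
  set E : Matrix (Fin n) (Fin n) ℝ := Matrix.of (fun _ j : Fin n => μ j) with hE
  set A : Matrix (Fin n) (Fin n) ℝ := 1 - P + E with hA
  -- powers of P are stochastic
  have hpow : ∀ m : ℕ, (∀ i j, 0 ≤ (P ^ m) i j) ∧ ∀ i, ∑ j, (P ^ m) i j = 1 := by
    intro m
    induction m with
    | zero =>
      constructor
      · intro i j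
        by_cases h : i = j <;> simp [Matrix.one_apply, h]
      · intro i; simp [Matrix.one_apply]
    | succ m ih =>
      constructor
      · intro i j
        rw [pow_succ, Matrix.mul_apply]
        exact Finset.sum_nonneg fun k _ => mul_nonneg (ih.1 i k) (hP.1 k j)
      · intro i
        simp only [pow_succ, Matrix.mul_apply]
        rw [Finset.sum_comm]
        calc ∑ k, ∑ j, (P ^ m) i k * P k j
            = ∑ k, (P ^ m) i k * ∑ j, P k j := by
              simp [Finset.mul_sum]
          _ = 1 := by simp [hP.2, ih.2 i]
  -- n ≠ 0
  have hne : Nonempty (Fin n) := by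
    rcases Nat.eq_zero_or_pos n with h | h
    · exfalso; subst h; simpa using hμ.2
    · exact ⟨⟨0, h⟩⟩
  -- injectivity of mulVec
  have hker : ∀ x : Fin n → ℝ, A *ᵥ x = 0 → x = 0 := by
    intro x hx
    -- μ ᵥ* A = μ
    have hμA : μ ᵥ* A = μ := by
      have hμE : μ ᵥ* E = μ := by
        funext j
        simp [Matrix.vecMul, dotProduct, hE, ← Finset.sum_mul, hμ.2]
      simp [hA, Matrix.vecMul_add, Matrix.vecMul_sub, hμP, hμE]
    have hdot : μ ⬝ᵥ x = 0 := by
      have := congrArg (fun v => v ⬝ᵥ x) hμA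
      rw [← this, ← Matrix.dotProduct_mulVec, hx, dotProduct_zero]
    -- A x = 0 gives P x = x
    have hEx : E *ᵥ x = 0 := by
      funext i
      simpa [hE, Matrix.mulVec, dotProduct] using hdot
    have hPx : P *ᵥ x = x := by
      have h1 : (1 - P + E) *ᵥ x = 0 := hx
      have := h1
      rw [Matrix.add_mulVec, Matrix.sub_mulVec, Matrix.one_mulVec, hEx] at this
      have h2 : x - P *ᵥ x = 0 := by
        have := this; simpa using this
      exact (sub_eq_zero.mp h2).symm
    have hPmx : ∀ m : ℕ, (P ^ m) *ᵥ x = x := by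
      intro m
      induction m with
      | zero => simp
      | succ m ih => rw [pow_succ, ← Matrix.mulVec_mulVec, hPx, ih]
    -- maximum principle
    obtain ⟨i0, hi0⟩ := Finite.exists_max x
    have hconst : ∀ j, x j = x i0 := by
      intro j
      obtain ⟨m, _, hm⟩ := hirr i0 j
      have hsum : ∑ k, (P ^ m) i0 k * x k = x i0 := by
        have := congrFun (hPmx m) i0
        simpa [Matrix.mulVec, dotProduct] using this
      have hle : (P ^ m) i0 j * (x i0 - x j) ≤ ∑ k, (P ^ m) i0 k * (x i0 - x k) := by
        apply Finset.single_le_sum (f := fun k => (P ^ m) i0 k * (x i0 - x k))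
        · intro k _
          exact mul_nonneg ((hpow m).1 i0 k) (sub_nonneg.2 (hi0 k))
        · exact Finset.mem_univ j
      have hzero : ∑ k, (P ^ m) i0 k * (x i0 - x k) = 0 := by
        simp only [mul_sub]
        rw [Finset.sum_sub_distrib, ← Finset.sum_mul, (hpow m).2 i0, hsum]
        ring
      rw [hzero] at hle
      have hxj : x i0 - x j ≤ 0 := by
        by_contra h
        push_neg at h
        nlinarith
      have := hi0 j
      linarith
    have hc : x i0 = 0 := by
      have : ∑ i, μ i * x i = 0 := by
        simpa [dotProduct] using hdot
      calc x i0 = (∑ i, μ i) * x i0 := by rw [hμ.2, one_mul]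
        _ = ∑ i, μ i * x i := by rw [Finset.sum_mul]; exact Finset.sum_congr rfl fun i _ => by rw [hconst i]
        _ = 0 := this
    funext j
    simp [hconst j, hc]
  rw [← Matrix.mulVec_injective_iff_isUnit]
  intro x y hxy
  have : A *ᵥ (x - y) = 0 := by
    rw [Matrix.mulVec_sub, hxy, sub_self]
  have := hker _ this
  exact sub_eq_zero.mp this
end

section
/- Let P_s and P_r be n×n row-stochastic matrices with stationary distributions μ_s and μ_r respectively, such that |(P_s)_{ij} − (P_r)_{ij}| ≤ B_P for all i, j. Suppose the matrix Z = (I − P_s + e·μ_sᵀ)⁻¹ exists. Then ‖μ_s − μ_r‖₂ ≤ B_P · n · ‖Z‖_F, and in particular |μ_s(i) − μ_r(i)| ≤ B_P · n · ‖Z‖_F for every state i. -/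
open Finset Matrix

/-- If `Ps, Pr` are row-stochastic with stationary distributions `μs, μr`,
their entries are `B_P`-close, and `Z = (I − Ps + e·μsᵀ)⁻¹` exists, then
`‖μs − μr‖₂ ≤ B_P · n · ‖Z‖_F` and in particular each coordinate difference is bounded
by the same quantity. -/
theorem stationary_distribution_perturbation_bound
    {n : ℕ} (Ps Pr : Matrix (Fin n) (Fin n) ℝ) (μs μr : Fin n → ℝ) (BP : ℝ)
    (hPs : (∀ i j, 0 ≤ Ps i j) ∧ ∀ i, ∑ j, Ps i j = 1)
    (hPr : (∀ i j, 0 ≤ Pr i j) ∧ ∀ i, ∑ j, Pr i j = 1)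
    (hμs : (∀ i, 0 ≤ μs i) ∧ ∑ i, μs i = 1) (hμsP : μs ᵥ* Ps = μs)
    (hμr : (∀ i, 0 ≤ μr i) ∧ ∑ i, μr i = 1) (hμrP : μr ᵥ* Pr = μr)
    (hclose : ∀ i j, |Ps i j - Pr i j| ≤ BP)
    (hinv : IsUnit (1 - Ps + Matrix.of (fun _ j : Fin n => μs j))) :
    Real.sqrt (∑ i, (μs i - μr i) ^ 2) ≤
      BP * n * Real.sqrt (∑ i, ∑ j,
        ((1 - Ps + Matrix.of (fun _ j : Fin n => μs j))⁻¹ i j) ^ 2) ∧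
    ∀ i, |μs i - μr i| ≤
      BP * n * Real.sqrt (∑ i, ∑ j,
        ((1 - Ps + Matrix.of (fun _ j : Fin n => μs j))⁻¹ i j) ^ 2) := by
  obtain ⟨hμsnn, hμssum⟩ := hμs
  obtain ⟨hμrnn, hμrsum⟩ := hμr
  rcases Nat.eq_zero_or_pos n with hn | hn
  · subst hn; simp at hμssum
  have hBP : 0 ≤ BP := le_trans (abs_nonneg _) (hclose ⟨0, hn⟩ ⟨0, hn⟩)
  set A : Matrix (Fin n) (Fin n) ℝ := 1 - Ps + Matrix.of (fun _ j : Fin n => μs j)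
    with hAdef
  set Z : Matrix (Fin n) (Fin n) ℝ := A⁻¹ with hZdef
  have hAZ : A * Z = 1 := Matrix.mul_nonsing_inv A ((Matrix.isUnit_iff_isUnit_det A).mp hinv)
  set w : Fin n → ℝ := μr ᵥ* (Pr - Ps) with hwdef
  -- μ ᵥ* E = μs for probability vectors μ
  have hE : ∀ (μ : Fin n → ℝ), (∑ i, μ i) = 1 →
      μ ᵥ* (Matrix.of (fun _ j : Fin n => μs j)) = μs := by
    intro μ hμ
    funext j
    simp only [Matrix.vecMul, dotProduct, Matrix.of_apply]
    rw [← Finset.sum_mul, hμ, one_mul]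
  have hμsA : μs ᵥ* A = μs := by
    rw [hAdef, Matrix.vecMul_add, Matrix.vecMul_sub, Matrix.vecMul_one, hμsP,
      hE μs hμssum]
    ring_nf
  have hμrA : μr ᵥ* A = μr - μr ᵥ* Ps + μs := by
    rw [hAdef, Matrix.vecMul_add, Matrix.vecMul_sub, Matrix.vecMul_one, hE μr hμrsum]
  have h1 : (μr - μs) ᵥ* A = w := by
    rw [Matrix.sub_vecMul, hμsA, hμrA, hwdef, Matrix.vecMul_sub, hμrP]
    abel
  have hkey : μr - μs = w ᵥ* Z := by
    calc μr - μs = (μr - μs) ᵥ* (A * Z) := by rw [hAZ, Matrix.vecMul_one]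
      _ = ((μr - μs) ᵥ* A) ᵥ* Z := by rw [Matrix.vecMul_vecMul]
      _ = w ᵥ* Z := by rw [h1]
  have hd : ∀ j, μs j - μr j = -∑ k, w k * Z k j := by
    intro j
    have := congrFun hkey j
    simp only [Pi.sub_apply, Matrix.vecMul, dotProduct] at this
    linarith [this]
  -- bound on |w k|
  have hwb : ∀ k, |w k| ≤ BP := by
    intro k
    have : |w k| ≤ ∑ i, |μr i * (Pr i k - Ps i k)| := by
      rw [hwdef]
      simp only [Matrix.vecMul, dotProduct, Matrix.sub_apply]
      exact Finset.abs_sum_le_sum_abs _ _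
    refine this.trans ?_
    calc ∑ i, |μr i * (Pr i k - Ps i k)| ≤ ∑ i, μr i * BP := by
          refine Finset.sum_le_sum fun i _ => ?_
          rw [abs_mul, abs_of_nonneg (hμrnn i)]
          exact mul_le_mul_of_nonneg_left (by rw [abs_sub_comm]; exact hclose i k) (hμrnn i)
      _ = BP := by rw [← Finset.sum_mul, hμrsum, one_mul]
  set F : ℝ := Real.sqrt (∑ i, ∑ j, Z i j ^ 2) with hFdef
  have hFnn : 0 ≤ F := Real.sqrt_nonneg _
  have hSS : (0:ℝ) ≤ ∑ i, ∑ j, Z i j ^ 2 :=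
    Finset.sum_nonneg fun i _ => Finset.sum_nonneg fun j _ => sq_nonneg _
  have hF2 : F ^ 2 = ∑ i, ∑ j, Z i j ^ 2 := Real.sq_sqrt hSS
  have hZF : ∀ k j, |Z k j| ≤ F := by
    intro k j
    rw [← Real.sqrt_sq_eq_abs, hFdef]
    apply Real.sqrt_le_sqrt
    calc Z k j ^ 2 ≤ ∑ j', Z k j' ^ 2 :=
          Finset.single_le_sum (f := fun j' => Z k j' ^ 2)
            (fun j' _ => sq_nonneg _) (Finset.mem_univ j)
      _ ≤ ∑ i, ∑ j', Z i j' ^ 2 :=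
          Finset.single_le_sum (f := fun i => ∑ j', Z i j' ^ 2)
            (fun i _ => Finset.sum_nonneg fun j' _ => sq_nonneg _) (Finset.mem_univ k)
  -- sharper coordinate bound
  have hdb : ∀ j, |μs j - μr j| ≤ BP * ∑ k, |Z k j| := by
    intro j
    rw [hd j, abs_neg]
    calc |∑ k, w k * Z k j| ≤ ∑ k, |w k * Z k j| := Finset.abs_sum_le_sum_abs _ _
      _ ≤ ∑ k, BP * |Z k j| := by
          refine Finset.sum_le_sum fun k _ => ?_
          rw [abs_mul]
          exact mul_le_mul_of_nonneg_right (hwb k) (abs_nonneg _)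
      _ = BP * ∑ k, |Z k j| := by rw [← Finset.mul_sum]
  constructor
  · -- Euclidean bound
    have hsum : ∑ j, (μs j - μr j) ^ 2 ≤ (BP * n * F) ^ 2 := by
      have step1 : ∑ j, (μs j - μr j) ^ 2 ≤ ∑ j, BP ^ 2 * (∑ k, |Z k j|) ^ 2 := by
        refine Finset.sum_le_sum fun j _ => ?_
        rw [← mul_pow, ← sq_abs (μs j - μr j)]
        exact pow_le_pow_left₀ (abs_nonneg _) (hdb j) 2
      have step2 : ∀ j, (∑ k, |Z k j|) ^ 2 ≤ (n : ℝ) * ∑ k, Z k j ^ 2 := by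
        intro j
        have := sq_sum_le_card_mul_sum_sq (s := Finset.univ)
          (f := fun k => |Z k j|)
        simpa [sq_abs] using this
      calc ∑ j, (μs j - μr j) ^ 2 ≤ ∑ j, BP ^ 2 * ((n : ℝ) * ∑ k, Z k j ^ 2) := by
            refine step1.trans (Finset.sum_le_sum fun j _ => ?_)
            exact mul_le_mul_of_nonneg_left (step2 j) (sq_nonneg _)
        _ = BP ^ 2 * (n : ℝ) * ∑ i, ∑ j, Z i j ^ 2 := by
            have hswap : ∑ j : Fin n, ∑ k : Fin n, Z k j ^ 2 = ∑ i, ∑ j, Z i j ^ 2 :=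
              Finset.sum_comm
            rw [← Finset.mul_sum, ← Finset.mul_sum, hswap]; ring
        _ ≤ BP ^ 2 * ((n : ℝ) * (n : ℝ)) * ∑ i, ∑ j, Z i j ^ 2 := by
            have h1n : (1:ℝ) ≤ (n : ℝ) := by exact_mod_cast hn
            exact mul_le_mul_of_nonneg_right
              (by nlinarith [mul_nonneg (mul_nonneg (sq_nonneg BP)
                (by linarith : (0:ℝ) ≤ (n:ℝ))) (by linarith : (0:ℝ) ≤ (n:ℝ) - 1)]) hSS
        _ = (BP * n * F) ^ 2 := by rw [← hF2]; ring
    calc Real.sqrt (∑ i, (μs i - μr i) ^ 2) ≤ Real.sqrt ((BP * n * F) ^ 2) :=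
          Real.sqrt_le_sqrt hsum
      _ = BP * n * F := Real.sqrt_sq (by positivity)
  · intro j
    refine (hdb j).trans ?_
    calc BP * ∑ k, |Z k j| ≤ BP * ∑ _k : Fin n, F :=
          mul_le_mul_of_nonneg_left (Finset.sum_le_sum fun k _ => hZF k j) hBP
      _ = BP * n * F := by rw [Finset.sum_const]; simp [mul_assoc]
end

section
/- Let P_s and P_r be n×n row-stochastic matrices (n ≥ 2), r̄ ∈ ℝ^n, η ∈ ℝ, and suppose v_s, v_r ∈ ℝ^n satisfy v_s = r̄ − η·e + P_s v_s and v_r = r̄ − η·e + P_r v_r together with the anchoring v_s(n) = v_r(n) = 0. Let P̃_s be the top-left (n−1)×(n−1) block of P_s and suppose Ĩ − P̃_s is invertible. Then for every index i, |v_s(i) − v_r(i)| ≤ ‖(Ĩ − P̃_s)⁻¹‖_F · ‖(P_s − P_r) v_r‖₂. -/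
open Finset Matrix

/-- For anchored solutions of the average-reward Bellman equations of two
row-stochastic matrices (on a state space of size `n+1 ≥ 2`), each coordinate of the
difference is bounded by `‖(Ĩ − P̃s)⁻¹‖_F · ‖(Ps − Pr) vr‖₂`, where `P̃s` is the
top-left `n×n` block of `Ps`. -/
theorem bellman_anchored_difference_bound
    {n : ℕ} (hn : 1 ≤ n)
    (Ps Pr : Matrix (Fin (n + 1)) (Fin (n + 1)) ℝ)
    (rbar vs vr : Fin (n + 1) → ℝ) (η : ℝ)
    (hPs : (∀ i j, 0 ≤ Ps i j) ∧ ∀ i, ∑ j, Ps i j = 1)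
    (hPr : (∀ i j, 0 ≤ Pr i j) ∧ ∀ i, ∑ j, Pr i j = 1)
    (hvs : vs = rbar - η • (fun _ => (1 : ℝ)) + Ps *ᵥ vs)
    (hvr : vr = rbar - η • (fun _ => (1 : ℝ)) + Pr *ᵥ vr)
    (hvs0 : vs (Fin.last n) = 0) (hvr0 : vr (Fin.last n) = 0)
    (hinv : IsUnit ((1 : Matrix (Fin n) (Fin n) ℝ) -
      Matrix.of (fun i j : Fin n => Ps i.castSucc j.castSucc))) :
    ∀ i, |vs i - vr i| ≤
      Real.sqrt (∑ i, ∑ j,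
        (((1 : Matrix (Fin n) (Fin n) ℝ) -
          Matrix.of (fun i j : Fin n => Ps i.castSucc j.castSucc))⁻¹ i j) ^ 2) *
      Real.sqrt (∑ i, (((Ps - Pr) *ᵥ vr) i) ^ 2) := by
  set A : Matrix (Fin n) (Fin n) ℝ := (1 : Matrix (Fin n) (Fin n) ℝ) -
      Matrix.of (fun i j : Fin n => Ps i.castSucc j.castSucc) with hA
  set B := A⁻¹ with hB
  set d : Fin (n + 1) → ℝ := vs - vr with hd
  set w : Fin (n + 1) → ℝ := (Ps - Pr) *ᵥ vr with hw
  -- d = Ps d + w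
  have key : d = Ps *ᵥ d + w := by
    have h3 : vs - vr = Ps *ᵥ vs - Pr *ᵥ vr := by
      conv_lhs => rw [hvs, hvr]
      abel
    rw [hd, hw, Matrix.mulVec_sub, Matrix.sub_mulVec, h3]
    abel
  have hdlast : d (Fin.last n) = 0 := by simp [hd, hvs0, hvr0]
  set dt : Fin n → ℝ := fun j => d j.castSucc with hdt
  set wt : Fin n → ℝ := fun j => w j.castSucc with hwt
  -- A *ᵥ dt = wt
  have hAdt : A *ᵥ dt = wt := by
    funext i
    have hkey : d i.castSucc = (Ps *ᵥ d) i.castSucc + w i.castSucc := by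
      conv_lhs => rw [key]
      rfl
    have hPd : (Ps *ᵥ d) i.castSucc = ∑ j : Fin n, Ps i.castSucc j.castSucc * dt j := by
      show ∑ j, Ps i.castSucc j * d j = _
      rw [Fin.sum_univ_castSucc]
      simp [hdlast, hdt]
    have hthis : dt i = ∑ j : Fin n, Ps i.castSucc j.castSucc * dt j + wt i := by
      simpa [hdt, hwt, hPd] using hkey
    show ∑ j, A i j * dt j = wt i
    simp only [hA, Matrix.sub_apply, Matrix.one_apply, Matrix.of_apply, sub_mul,
      Finset.sum_sub_distrib, ite_mul, one_mul, zero_mul,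
      Finset.sum_ite_eq, Finset.mem_univ, if_true]
    linarith [hthis]
  have hAunit : IsUnit A.det := (Matrix.isUnit_iff_isUnit_det A).mp hinv
  have hdt_eq : dt = B *ᵥ wt := by
    rw [hB, ← hAdt, Matrix.mulVec_mulVec, Matrix.nonsing_inv_mul A hAunit, Matrix.one_mulVec]
  -- the bounds
  have hwle : ∑ j : Fin n, wt j ^ 2 ≤ ∑ i, w i ^ 2 := by
    rw [Fin.sum_univ_castSucc]
    have : 0 ≤ w (Fin.last n) ^ 2 := sq_nonneg _
    simp only [hwt]
    linarith
  have main : ∀ i : Fin n, |dt i| ≤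
      Real.sqrt (∑ i, ∑ j, B i j ^ 2) * Real.sqrt (∑ i, w i ^ 2) := by
    intro i
    rw [hdt_eq]
    have hCS : ((B *ᵥ wt) i) ^ 2 ≤ (∑ j, B i j ^ 2) * (∑ j, wt j ^ 2) := by
      calc ((B *ᵥ wt) i) ^ 2 = (∑ j, B i j * wt j) ^ 2 := rfl
        _ ≤ (∑ j, B i j ^ 2) * (∑ j, wt j ^ 2) :=
          Finset.sum_mul_sq_le_sq_mul_sq Finset.univ _ _
    have h1 : (∑ j, B i j ^ 2) ≤ ∑ i, ∑ j, B i j ^ 2 :=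
      Finset.single_le_sum (f := fun i => ∑ j, B i j ^ 2)
        (fun i _ => Finset.sum_nonneg fun j _ => sq_nonneg _) (Finset.mem_univ i)
    calc |(B *ᵥ wt) i| = Real.sqrt (((B *ᵥ wt) i) ^ 2) := (Real.sqrt_sq_eq_abs _).symm
      _ ≤ Real.sqrt ((∑ j, B i j ^ 2) * (∑ j, wt j ^ 2)) := Real.sqrt_le_sqrt hCS
      _ ≤ Real.sqrt ((∑ i, ∑ j, B i j ^ 2) * (∑ i, w i ^ 2)) := by
          apply Real.sqrt_le_sqrt
          apply mul_le_mul h1 hwle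
          · exact Finset.sum_nonneg fun j _ => sq_nonneg _
          · exact Finset.sum_nonneg fun i _ => Finset.sum_nonneg fun j _ => sq_nonneg _
      _ = Real.sqrt (∑ i, ∑ j, B i j ^ 2) * Real.sqrt (∑ i, w i ^ 2) :=
          Real.sqrt_mul (Finset.sum_nonneg fun i _ =>
            Finset.sum_nonneg fun j _ => sq_nonneg _) _
  intro i
  induction i using Fin.lastCases with
  | last =>
    rw [hvs0, hvr0]
    simp only [sub_zero, abs_zero]
    positivity
  | cast j =>
    have := main j
    simpa [hdt, hd, hw] using this
end

section
/- Let P_1, …, P_K be n×n irreducible row-stochastic matrices with stationary distributions μ_1, …, μ_K all having positive entries, let D_k = diag(μ_k), let β be a probability vector over {1,…,K} with β_k > 0 for every k, and let A = Σ_k β_k D_k (P_k − I). Let Φ ∈ ℝ^{n×d} have full column rank and satisfy Φ w ≠ e for every w ∈ ℝ^d. Then the d×d matrix Φᵀ A Φ is invertible; in particular, for any b ∈ ℝ^n the equation Φᵀ A Φ v + Φᵀ b = 0 has a unique solution v ∈ ℝ^d. -/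
open Finset Matrix

lemma quad_form {n : ℕ} (P : Matrix (Fin n) (Fin n) ℝ) (μ : Fin n → ℝ)
    (hrow : ∀ i, ∑ j, P i j = 1) (hstat : μ ᵥ* P = μ) (x : Fin n → ℝ) :
    x ⬝ᵥ ((Matrix.diagonal μ * (P - 1)) *ᵥ x)
      = -(1/2) * ∑ i, ∑ j, μ i * P i j * (x i - x j)^2 := by
  have hstat' : ∀ j, ∑ i, μ i * P i j = μ j := by
    intro j
    have := congrFun hstat j
    simpa [Matrix.vecMul, dotProduct] using this
  have hS2 : ∑ i, ∑ j, μ i * P i j * (x i)^2 = ∑ i, μ i * (x i)^2 := by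
    refine Finset.sum_congr rfl fun i _ => ?_
    calc ∑ j, μ i * P i j * (x i)^2 = μ i * (x i)^2 * ∑ j, P i j := by
          rw [Finset.mul_sum]; exact Finset.sum_congr rfl fun j _ => by ring
      _ = μ i * (x i)^2 := by rw [hrow i]; ring
  have hS3 : ∑ i, ∑ j, μ i * P i j * (x j)^2 = ∑ i, μ i * (x i)^2 := by
    rw [Finset.sum_comm]
    refine Finset.sum_congr rfl fun j _ => ?_
    calc ∑ i, μ i * P i j * (x j)^2 = (∑ i, μ i * P i j) * (x j)^2 := by
          rw [Finset.sum_mul]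
      _ = μ j * (x j)^2 := by rw [hstat' j]
  have happ : ∀ i, ((Matrix.diagonal μ * (P - 1)) *ᵥ x) i
      = (∑ j, μ i * P i j * x j) - μ i * x i := by
    intro i
    simp only [Matrix.mulVec, dotProduct, Matrix.diagonal_mul, Matrix.sub_apply,
      Matrix.one_apply]
    have h1 : ∀ j, μ i * (P i j - if i = j then 1 else 0) * x j
        = μ i * P i j * x j - (if i = j then μ i * x j else 0) := fun j => by
      by_cases h : i = j <;> simp [h] <;> ring
    rw [Finset.sum_congr rfl fun j _ => h1 j, Finset.sum_sub_distrib]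
    simp
  have hLHS : x ⬝ᵥ ((Matrix.diagonal μ * (P - 1)) *ᵥ x)
      = (∑ i, ∑ j, μ i * P i j * (x i * x j)) - ∑ i, μ i * (x i)^2 := by
    simp only [dotProduct, happ]
    rw [← Finset.sum_sub_distrib]
    refine Finset.sum_congr rfl fun i _ => ?_
    rw [mul_sub]
    congr 1
    · rw [Finset.mul_sum]; exact Finset.sum_congr rfl fun j _ => by ring
    · ring
  rw [hLHS]
  have hexp : ∑ i, ∑ j, μ i * P i j * (x i - x j)^2
      = (∑ i, ∑ j, μ i * P i j * (x i)^2) - 2 * (∑ i, ∑ j, μ i * P i j * (x i * x j))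
        + ∑ i, ∑ j, μ i * P i j * (x j)^2 := by
    rw [Finset.mul_sum, ← Finset.sum_sub_distrib, ← Finset.sum_add_distrib]
    refine Finset.sum_congr rfl fun i _ => ?_
    rw [Finset.mul_sum, ← Finset.sum_sub_distrib, ← Finset.sum_add_distrib]
    refine Finset.sum_congr rfl fun j _ => by ring
  rw [hexp, hS2, hS3]
  ring

lemma pow_entry_nonneg {n : ℕ} {P : Matrix (Fin n) (Fin n) ℝ}
    (hP : ∀ i j, 0 ≤ P i j) : ∀ m i j, 0 ≤ (P ^ m) i j := by
  intro m
  induction m with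
  | zero => intro i j; simp [Matrix.one_apply]; positivity
  | succ m ih =>
    intro i j
    rw [pow_succ, Matrix.mul_apply]
    exact Finset.sum_nonneg fun l _ => mul_nonneg (ih i l) (hP l j)

lemma const_of_adj {n : ℕ} {P : Matrix (Fin n) (Fin n) ℝ} {x : Fin n → ℝ}
    (hP : ∀ i j, 0 ≤ P i j)
    (hadj : ∀ i j, 0 < P i j → x i = x j) :
    ∀ m i j, 0 < (P ^ m) i j → x i = x j := by
  intro m
  induction m with
  | zero =>
    intro i j h
    by_cases hij : i = j
    · rw [hij]
    · simp [Matrix.one_apply, hij] at h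
  | succ m ih =>
    intro i j h
    rw [pow_succ, Matrix.mul_apply] at h
    have : ∃ l, 0 < (P ^ m) i l * P l j := by
      by_contra hc
      push_neg at hc
      exact absurd (Finset.sum_nonpos fun l _ => hc l) (not_le.2 h)
    obtain ⟨l, hl⟩ := this
    have h1 : 0 < (P ^ m) i l := by
      rcases lt_or_eq_of_le (pow_entry_nonneg hP m i l) with h' | h'
      · exact h'
      · rw [← h'] at hl; simp at hl
    have h2 : 0 < P l j := by
      rcases lt_or_eq_of_le (hP l j) with h' | h'
      · exact h'
      · rw [← h'] at hl; simp at hl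
    exact (ih i l h1).trans (hadj l j h2)

/-- With `A = Σ_k β_k D_k (P_k − I)` built from irreducible row-stochastic
matrices with positive stationary distributions, strictly positive mixing weights, and a
full-column-rank feature matrix `Φ` with `Φ w ≠ e` for all `w`, the matrix `Φᵀ A Φ` is
invertible; in particular `Φᵀ A Φ v + Φᵀ b = 0` has a unique solution for every `b`. -/
theorem critic_fixed_point_unique
    {n d K : ℕ}
    (P : Fin K → Matrix (Fin n) (Fin n) ℝ) (μ : Fin K → Fin n → ℝ)
    (β : Fin K → ℝ) (Φ : Matrix (Fin n) (Fin d) ℝ)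
    (hP : ∀ k, (∀ i j, 0 ≤ P k i j) ∧ ∀ i, ∑ j, P k i j = 1)
    (hirr : ∀ k, ∀ i j : Fin n, ∃ m : ℕ, 1 ≤ m ∧ 0 < (P k ^ m) i j)
    (hμ : ∀ k, (∀ i, 0 < μ k i) ∧ ∑ i, μ k i = 1)
    (hμP : ∀ k, μ k ᵥ* P k = μ k)
    (hβpos : ∀ k, 0 < β k) (hβsum : ∑ k, β k = 1)
    (hΦrank : Function.Injective fun w : Fin d → ℝ => Φ *ᵥ w)
    (hΦe : ∀ w : Fin d → ℝ, Φ *ᵥ w ≠ fun _ => (1 : ℝ)) :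
    IsUnit (Φᵀ * (∑ k, β k • (Matrix.diagonal (μ k) * (P k - 1))) * Φ) ∧
    ∀ b : Fin n → ℝ, ∃! v : Fin d → ℝ,
      (Φᵀ * (∑ k, β k • (Matrix.diagonal (μ k) * (P k - 1))) * Φ) *ᵥ v
        + Φᵀ *ᵥ b = 0 := by
  have hK : 0 < K := by
    by_contra h
    push_neg at h
    interval_cases K
    simp at hβsum
  have hn : 0 < n := by
    by_contra h
    push_neg at h
    interval_cases n
    exact hΦe 0 (funext fun i => i.elim0)
  set A : Matrix (Fin n) (Fin n) ℝ := ∑ k, β k • (Matrix.diagonal (μ k) * (P k - 1)) with hA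
  set M : Matrix (Fin d) (Fin d) ℝ := Φᵀ * A * Φ with hM
  -- quadratic form on A
  have hquadA : ∀ x : Fin n → ℝ, x ⬝ᵥ (A *ᵥ x)
      = ∑ k, β k * (-(1/2) * ∑ i, ∑ j, μ k i * P k i j * (x i - x j)^2) := by
    intro x
    have hsum : A *ᵥ x = ∑ k, β k • ((Matrix.diagonal (μ k) * (P k - 1)) *ᵥ x) := by
      ext i
      simp only [hA, Matrix.mulVec, dotProduct, Matrix.sum_apply, Matrix.smul_apply,
        Finset.sum_apply, Pi.smul_apply, smul_eq_mul, Finset.sum_mul, Finset.mul_sum]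
      rw [Finset.sum_comm]
      exact Finset.sum_congr rfl fun k _ => Finset.sum_congr rfl fun j _ => by ring
    have hdots : x ⬝ᵥ (∑ k, β k • ((Matrix.diagonal (μ k) * (P k - 1)) *ᵥ x))
        = ∑ k, x ⬝ᵥ (β k • ((Matrix.diagonal (μ k) * (P k - 1)) *ᵥ x)) := by
      simp only [dotProduct, Finset.sum_apply, Finset.mul_sum]
      exact Finset.sum_comm
    rw [hsum, hdots]
    refine Finset.sum_congr rfl fun k _ => ?_
    rw [dotProduct_smul,
      quad_form (P k) (μ k) (hP k).2 (hμP k) x]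
    simp [smul_eq_mul]
  -- each inner double sum is nonneg
  have hQnonneg : ∀ (k : Fin K) (x : Fin n → ℝ),
      0 ≤ ∑ i, ∑ j, μ k i * P k i j * (x i - x j)^2 := by
    intro k x
    refine Finset.sum_nonneg fun i _ => Finset.sum_nonneg fun j _ => ?_
    have := (hμ k).1 i
    have := (hP k).1 i j
    positivity
  -- strict negativity
  have hneg : ∀ v : Fin d → ℝ, v ≠ 0 → (Φ *ᵥ v) ⬝ᵥ (A *ᵥ (Φ *ᵥ v)) < 0 := by
    intro v hv
    set x : Fin n → ℝ := Φ *ᵥ v with hx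
    have hxnc : ¬ ∀ i j, x i = x j := by
      intro hc
      set c : ℝ := x ⟨0, hn⟩ with hcdef
      by_cases hc0 : c = 0
      · apply hv
        apply hΦrank
        show Φ *ᵥ v = Φ *ᵥ 0
        rw [Matrix.mulVec_zero, ← hx]
        funext i
        rw [hc i ⟨0, hn⟩, ← hcdef, hc0]
        rfl
      · apply hΦe (c⁻¹ • v)
        rw [Matrix.mulVec_smul]
        funext i
        show c⁻¹ * x i = 1
        rw [hc i ⟨0, hn⟩, ← hcdef, inv_mul_cancel₀ hc0]
    rw [hquadA]
    have hle : ∀ k ∈ Finset.univ,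
        β k * (-(1/2) * ∑ i, ∑ j, μ k i * P k i j * (x i - x j)^2) ≤ 0 := by
      intro k _
      have h1 := hQnonneg k x
      have h2 := (hβpos k).le
      nlinarith
    rcases lt_or_eq_of_le (Finset.sum_nonpos hle) with h | h
    · exact h
    · exfalso
      have hall := (Finset.sum_eq_zero_iff_of_nonpos hle).1 h
      set k0 : Fin K := ⟨0, hK⟩
      have hk0 := hall k0 (Finset.mem_univ k0)
      have hQ0 : ∑ i, ∑ j, μ k0 i * P k0 i j * (x i - x j)^2 = 0 := by
        have hβ := (hβpos k0).ne'
        have : (-(1/2) * ∑ i, ∑ j, μ k0 i * P k0 i j * (x i - x j)^2) = 0 :=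
          (mul_eq_zero.1 hk0).resolve_left hβ
        nlinarith [this]
      -- each term zero
      have hterm : ∀ i j, μ k0 i * P k0 i j * (x i - x j)^2 = 0 := by
        intro i j
        have h1 : ∀ i ∈ Finset.univ, (0:ℝ) ≤ ∑ j, μ k0 i * P k0 i j * (x i - x j)^2 :=
          fun i _ => Finset.sum_nonneg fun j _ => by
            have := (hμ k0).1 i; have := (hP k0).1 i j; positivity
        have h2 := (Finset.sum_eq_zero_iff_of_nonneg h1).1 hQ0 i (Finset.mem_univ i)
        have h3 : ∀ j ∈ Finset.univ, (0:ℝ) ≤ μ k0 i * P k0 i j * (x i - x j)^2 :=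
          fun j _ => by have := (hμ k0).1 i; have := (hP k0).1 i j; positivity
        exact (Finset.sum_eq_zero_iff_of_nonneg h3).1 h2 j (Finset.mem_univ j)
      have hadj : ∀ i j, 0 < P k0 i j → x i = x j := by
        intro i j hpos
        have hμpos := (hμ k0).1 i
        have := hterm i j
        have hsq : (x i - x j)^2 = 0 := by
          rcases mul_eq_zero.1 this with h' | h'
          · exact absurd h' (by positivity)
          · exact h'
        have := pow_eq_zero_iff (n := 2) (by norm_num) |>.1 hsq
        linarith [sub_eq_zero.1 this]
      apply hxnc
      intro i j
      obtain ⟨m, _, hm⟩ := hirr k0 i j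
      exact const_of_adj (hP k0).1 hadj m i j hm
  -- relate M quadratic form
  have hdot : ∀ v : Fin d → ℝ, v ⬝ᵥ (M *ᵥ v) = (Φ *ᵥ v) ⬝ᵥ (A *ᵥ (Φ *ᵥ v)) := by
    intro v
    rw [hM, ← Matrix.mulVec_mulVec, ← Matrix.mulVec_mulVec,
      Matrix.dotProduct_mulVec, Matrix.vecMul_transpose]
  -- injectivity
  have hinj : Function.Injective M.mulVec := by
    intro v w h
    by_contra hvw
    have hsub : v - w ≠ 0 := sub_ne_zero.2 hvw
    have h0 : M *ᵥ (v - w) = 0 := by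
      rw [Matrix.mulVec_sub, h, sub_self]
    have := hneg (v - w) hsub
    rw [← hdot, h0, dotProduct_zero] at this
    exact lt_irrefl 0 this
  have hUnit : IsUnit M := Matrix.mulVec_injective_iff_isUnit.1 hinj
  refine ⟨hUnit, fun b => ?_⟩
  have hdet : IsUnit M.det := (Matrix.isUnit_iff_isUnit_det M).1 hUnit
  refine ⟨M⁻¹ *ᵥ (-(Φᵀ *ᵥ b)), ?_, ?_⟩
  · show M *ᵥ (M⁻¹ *ᵥ (-(Φᵀ *ᵥ b))) + Φᵀ *ᵥ b = 0
    rw [Matrix.mulVec_mulVec, Matrix.mul_nonsing_inv M hdet, Matrix.one_mulVec]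
    exact neg_add_cancel _
  · intro y hy
    apply hinj
    rw [Matrix.mulVec_mulVec, Matrix.mul_nonsing_inv M hdet, Matrix.one_mulVec]
    exact eq_neg_of_add_eq_zero_left hy
end

section
/- Let S be a finite state space and A a finite action space, P_1, …, P_K transition kernels, r : S × A → ℝ, φ : S → ℝ^d, and β a probability vector over {1,…,K}. Let θ ↦ π_θ(a|s) be differentiable on ℝ^m with each π_θ(·|s) a probability distribution on A; let θ ↦ μ_k(θ) be differentiable with μ_k(θ) a stationary distribution of the induced Markov matrix P_k^{π_θ}; and let θ ↦ v(θ) ∈ ℝ^d be differentiable. Define η_k(θ) = Σ_s μ_k(θ)(s) Σ_a π_θ(a|s) r(s,a), η̄(θ) = Σ_k β_k η_k(θ), Q̄_k(θ,s,a) = r(s,a) − η_k(θ) + Σ_{s'} P_k(s'|s,a) φ(s')ᵀ v(θ), and V̄_k(θ,s) = Σ_a π_θ(a|s) Q̄_k(θ,s,a). Then the gradient of the mixed average reward satisfies ∇_θ η̄(θ) = Σ_k β_k Σ_s μ_k(θ)(s) Σ_a ∇_θ π_θ(a|s) · Q̄_k(θ,s,a) + Σ_k β_k Σ_s μ_k(θ)(s)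 · ( ∇_θ( φ(s)ᵀ v(θ) ) − ∇_θ V̄_k(θ,s) ). -/
open Finset

/-- Gradient decomposition of the mixed average reward:
`∇η̄(θ) = Σ_k β_k Σ_s μ_k(θ)(s) Σ_a ∇π_θ(a|s)·Q̄_k(θ,s,a)
        + Σ_k β_k Σ_s μ_k(θ)(s)·(∇(φ(s)ᵀ v(θ)) − ∇V̄_k(θ,s))`. -/
theorem mixed_average_reward_gradient
    {S A : Type*} [Fintype S] [Fintype A]
    {K d m : ℕ}
    (π : (Fin m → ℝ) → S → A → ℝ)
    (P : Fin K → S → A → S → ℝ)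
    (μ : Fin K → (Fin m → ℝ) → S → ℝ)
    (v : (Fin m → ℝ) → Fin d → ℝ)
    (φ : S → Fin d → ℝ) (r : S → A → ℝ) (β : Fin K → ℝ)
    (hP : ∀ k s a, (∀ s', 0 ≤ P k s a s') ∧ ∑ s', P k s a s' = 1)
    (hβ : (∀ k, 0 ≤ β k) ∧ ∑ k, β k = 1)
    (hπ : ∀ θ s, (∀ a, 0 ≤ π θ s a) ∧ ∑ a, π θ s a = 1)
    (hπdiff : ∀ s a, Differentiable ℝ fun θ => π θ s a)
    (hμ : ∀ k θ, (∀ s, 0 ≤ μ k θ s) ∧ ∑ s, μ k θ s = 1)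
    (hμstat : ∀ k θ s', ∑ s, μ k θ s * ∑ a, π θ s a * P k s a s' = μ k θ s')
    (hμdiff : ∀ k s, Differentiable ℝ fun θ => μ k θ s)
    (hvdiff : ∀ i, Differentiable ℝ fun θ => v θ i)
    -- named auxiliary quantities
    (ηk : Fin K → (Fin m → ℝ) → ℝ)
    (hηk : ∀ k θ, ηk k θ = ∑ s, μ k θ s * ∑ a, π θ s a * r s a)
    (ηbar : (Fin m → ℝ) → ℝ)
    (hηbar : ∀ θ, ηbar θ = ∑ k, β k * ηk k θ)
    (Q : Fin K → (Fin m → ℝ) → S → A → ℝ)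
    (hQ : ∀ k θ s a, Q k θ s a =
      r s a - ηk k θ + ∑ s', P k s a s' * ∑ i, φ s' i * v θ i)
    (V : Fin K → (Fin m → ℝ) → S → ℝ)
    (hV : ∀ k θ s, V k θ s = ∑ a, π θ s a * Q k θ s a)
    (θ : Fin m → ℝ) :
    fderiv ℝ ηbar θ =
      (∑ k, β k • ∑ s, μ k θ s • ∑ a,
          Q k θ s a • fderiv ℝ (fun θ' => π θ' s a) θ)
      +
      (∑ k, β k • ∑ s, μ k θ s •
          (fderiv ℝ (fun θ' => ∑ i, φ s i * v θ' i) θ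
            - fderiv ℝ (fun θ' => V k θ' s) θ)) := by
  -- abbreviations for derivatives
  set Dπ : S → A → (Fin m → ℝ) →L[ℝ] ℝ := fun s a => fderiv ℝ (fun θ' => π θ' s a) θ with hDπ
  set Dg : S → (Fin m → ℝ) →L[ℝ] ℝ := fun s => fderiv ℝ (fun θ' => ∑ i, φ s i * v θ' i) θ with hDg
  set Dη : Fin K → (Fin m → ℝ) →L[ℝ] ℝ := fun k => fderiv ℝ (ηk k) θ with hDη
  have hgdiff : ∀ s : S, Differentiable ℝ (fun θ' => ∑ i, φ s i * v θ' i) :=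
    fun s => Differentiable.fun_sum fun i _ => (hvdiff i).const_mul _
  have hηkdiff : ∀ k, Differentiable ℝ (ηk k) := by
    intro k
    have h : ηk k = fun θ' => ∑ s, μ k θ' s * ∑ a, π θ' s a * r s a := funext (hηk k)
    rw [h]
    exact Differentiable.fun_sum fun s _ =>
      (hμdiff k s).mul (Differentiable.fun_sum fun a _ => (hπdiff s a).mul_const _)
  have hQdiff : ∀ k s a, Differentiable ℝ (fun θ' => Q k θ' s a) := by
    intro k s a
    have h : (fun θ' => Q k θ' s a)
        = fun θ' => (r s a - ηk k θ') + ∑ s', P k s a s' * ∑ i, φ s' i * v θ' i :=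
      funext fun θ' => hQ k θ' s a
    rw [h]
    exact ((differentiable_const _).sub (hηkdiff k)).add
      (Differentiable.fun_sum fun s' _ => (hgdiff s').const_mul _)
  have hQder : ∀ k s a, fderiv ℝ (fun θ' => Q k θ' s a) θ
      = (∑ s', P k s a s' • Dg s') - Dη k := by
    intro k s a
    have h : (fun θ' => Q k θ' s a)
        = fun θ' => (r s a - ηk k θ') + ∑ s', P k s a s' * ∑ i, φ s' i * v θ' i :=
      funext fun θ' => hQ k θ' s a
    rw [h, fderiv_fun_add ((differentiableAt_const _).fun_sub ((hηkdiff k) θ))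
        (DifferentiableAt.fun_sum fun s' _ => ((hgdiff s') θ).const_mul _),
      fderiv_const_sub, fderiv_fun_sum fun s' _ => ((hgdiff s') θ).const_mul _]
    simp only [fderiv_const_mul ((hgdiff _) θ)]
    abel
  have hVder : ∀ k s, fderiv ℝ (fun θ' => V k θ' s) θ
      = ∑ a, (π θ s a • ((∑ s', P k s a s' • Dg s') - Dη k) + Q k θ s a • Dπ s a) := by
    intro k s
    have h : (fun θ' => V k θ' s) = fun θ' => ∑ a, π θ' s a * Q k θ' s a :=
      funext fun θ' => hV k θ' s
    rw [h, fderiv_fun_sum fun a _ => ((hπdiff s a) θ).fun_mul ((hQdiff k s a) θ)]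
    refine Finset.sum_congr rfl fun a _ => ?_
    rw [fderiv_fun_mul ((hπdiff s a) θ) ((hQdiff k s a) θ), hQder]
  have hηbarder : fderiv ℝ ηbar θ = ∑ k, β k • Dη k := by
    have h : ηbar = fun θ' => ∑ k, β k * ηk k θ' := funext hηbar
    rw [h, fderiv_fun_sum fun k _ => ((hηkdiff k) θ).const_mul _]
    exact Finset.sum_congr rfl fun k _ => fderiv_const_mul ((hηkdiff k) θ) _
  rw [hηbarder]
  simp only [hVder]
  rw [← Finset.sum_add_distrib]
  refine Finset.sum_congr rfl fun k _ => ?_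
  rw [← smul_add]
  congr 1
  -- now per-k identity as CLMs; apply to a vector
  ext u
  simp only [ContinuousLinearMap.add_apply, ContinuousLinearMap.sub_apply,
    ContinuousLinearMap.smul_apply, ContinuousLinearMap.sum_apply, smul_eq_mul]
  -- name the scalar quantities
  have key : ∀ s', ∑ s, μ k θ s * ∑ a, π θ s a * P k s a s' = μ k θ s' := hμstat k θ
  have hπ1 : ∀ s, ∑ a, π θ s a = 1 := fun s => (hπ θ s).2
  have hμ1 : ∑ s, μ k θ s = 1 := (hμ k θ).2
  -- expand everything
  simp only [mul_add, mul_sub, Finset.sum_add_distrib, Finset.sum_sub_distrib, Finset.mul_sum]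
  have hDπ' : ∀ s a, fderiv ℝ (fun θ' => π θ' s a) θ = Dπ s a := fun _ _ => rfl
  have hDg' : ∀ s, fderiv ℝ (fun θ' => ∑ i, φ s i * v θ' i) θ = Dg s := fun _ => rfl
  simp only [hDπ', hDg']
  have hE : ∑ x, ∑ a, μ k θ x * (π θ x a * (Dη k) u) = (Dη k) u := by
    have h1 : ∀ x : S, ∑ a, μ k θ x * (π θ x a * (Dη k) u) = μ k θ x * (Dη k) u := by
      intro x
      rw [← Finset.mul_sum, ← Finset.sum_mul, hπ1, one_mul]
    rw [Finset.sum_congr rfl fun x _ => h1 x, ← Finset.sum_mul, hμ1, one_mul]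
  have hT : ∑ x, ∑ a, ∑ s', μ k θ x * (π θ x a * (P k x a s' * (Dg s') u))
      = ∑ s', μ k θ s' * (Dg s') u := by
    rw [Finset.sum_congr rfl fun (x : S) _ =>
      (Finset.sum_comm : ∑ a, ∑ s', μ k θ x * (π θ x a * (P k x a s' * (Dg s') u)) = _),
      Finset.sum_comm]
    refine Finset.sum_congr rfl fun s' _ => ?_
    have h2 : ∀ x : S, ∑ a, μ k θ x * (π θ x a * (P k x a s' * (Dg s') u))
        = (μ k θ x * ∑ a, π θ x a * P k x a s') * (Dg s') u := by
      intro x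
      rw [Finset.mul_sum, Finset.sum_mul]
      exact Finset.sum_congr rfl fun a _ => by ring
    rw [Finset.sum_congr rfl fun x _ => h2 x, ← Finset.sum_mul, key]
  rw [hT, hE]
  ring
end
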